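/- Let G be a topological group acting continuously on a compact Hausdorff space X such that the action is minimal and proximal. Then the only endomorphism of this flow (continuous G-equivariant map from X to itself) is the identity map. -/

import Mathlib

/-- A flow is minimal if every orbit is dense. -/
def IsMinimalFlow (G X : Type*) [Group G] [TopologicalSpace X] [MulAction G X] : Prop :=
  ∀ x : X, Dense (Set.range fun g : G => g • x)

/-- A flow is proximal if every pair of points can be pushed together:
there is a net `t_n` with `lim t_n x = lim t_n y`, equivalently some `(z,z)` lies in the
closure of the orbit of `(x,y)` under the diagonal action. -/
def IsProximalFlow (G X : Type*) [Group G] [TopologicalSpace X] [MulAction G X] : Prop :=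
  ∀ x y : X, ∃ z : X, (z, z) ∈ closure (Set.range fun g : G => (g • x, g • y))

theorem endomorphism_of_minimal_proximal_is_id
    (G X : Type*) [Group G] [TopologicalSpace G] [IsTopologicalGroup G]
    [TopologicalSpace X] [CompactSpace X] [T2Space X]
    [MulAction G X] [ContinuousSMul G X]
    (hmin : IsMinimalFlow G X) (hprox : IsProximalFlow G X)
    (h : X → X) (hc : Continuous h) (heq : ∀ (t : G) (x : X), h (t • x) = t • h x) :
    h = id := by
  funext x
  obtain ⟨z, hz⟩ := hprox x (h x)
  -- the graph of h is closed
  have hgraph : IsClosed {p : X × X | h p.1 = p.2} :=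
    isClosed_eq (hc.comp continuous_fst) continuous_snd
  have hsub : Set.range (fun g : G => (g • x, g • h x)) ⊆ {p : X × X | h p.1 = p.2} := by
    rintro p ⟨g, rfl⟩
    simp [heq]
  have hzfix : h z = z := by
    have := closure_minimal hsub hgraph hz
    exact this
  -- fixed point set is closed and contains the orbit of z
  have hfixclosed : IsClosed {y : X | h y = y} := isClosed_eq hc continuous_id
  have horb : Set.range (fun g : G => g • z) ⊆ {y : X | h y = y} := by
    rintro y ⟨g, rfl⟩
    simp [heq, hzfix]
  have : closure (Set.range fun g : G => g • z) ⊆ {y : X | h y = y} :=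
    closure_minimal horb hfixclosed
  have hx : x ∈ {y : X | h y = y} := this ((hmin z).closure_eq ▸ Set.mem_univ x)
  exact hx
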